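/- Let f : ℂ → ℂ be complex-differentiable on an open set containing the closed second quadrant Q = {z ∈ ℂ : Re z ≤ 0 and Im z ≥ 0}, and suppose there exist constants C > 0 and ε > 0 such that ‖f(z)‖ ≤ C·exp(−ε·‖z‖) for all z ∈ Q. Then the integral of f along the negative real axis can be rotated onto the positive imaginary axis: ∫_{x ∈ (−∞,0)} f(x) dx = −i · ∫_{t ∈ (0,∞)} f(i·t) dt, both integrals being absolutely convergent. -/

import Mathlib

open MeasureTheory Set Complex Filter Topology
open scoped Interval

lemma wick_exp_mul_integrableOn_Iio {b : ℝ} (hb : 0 < b) :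
    IntegrableOn (fun x : ℝ => Real.exp (b * x)) (Iio (0 : ℝ)) := by
  have h := exp_neg_integrableOn_Ioi 0 hb
  rw [← (Measure.measurePreserving_neg (volume : Measure ℝ)).integrableOn_comp_preimage
      (Homeomorph.neg ℝ).measurableEmbedding]
  simpa [Function.comp_def, neg_Iio, mul_comm, neg_mul, mul_neg] using h

lemma wick_tendsto_aux {C ε : ℝ} (hε : 0 < ε) :
    Tendsto (fun R : ℝ => C * Real.exp (-ε * R) * R) atTop (𝓝 0) := by
  have h1 : Tendsto (fun x : ℝ => x ^ 1 * Real.exp (-x)) atTop (𝓝 0) :=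
    Real.tendsto_pow_mul_exp_neg_atTop_nhds_zero 1
  have h2 : Tendsto (fun R : ℝ => ε * R) atTop atTop := tendsto_id.const_mul_atTop hε
  have h3 := (h1.comp h2).const_mul (C / ε)
  rw [mul_zero] at h3
  refine h3.congr fun R => ?_
  simp only [Function.comp_apply, pow_one]
  field_simp

/-- **Wick rotation.** If `f` is complex-differentiable on an open set containing the
closed second quadrant `Q = {z | Re z ≤ 0 ∧ Im z ≥ 0}` and decays exponentially on `Q`,
then the integral of `f` along the negative real axis can be rotated onto the positive
imaginary axis, both integrals being absolutely convergent. -/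
theorem wick_rotation
    (f : ℂ → ℂ) (U : Set ℂ) (hU : IsOpen U)
    (hQU : {z : ℂ | z.re ≤ 0 ∧ 0 ≤ z.im} ⊆ U)
    (hf : DifferentiableOn ℂ f U)
    (C ε : ℝ) (hC : 0 < C) (hε : 0 < ε)
    (hbound : ∀ z ∈ {z : ℂ | z.re ≤ 0 ∧ 0 ≤ z.im}, ‖f z‖ ≤ C * Real.exp (-ε * ‖z‖)) :
    IntegrableOn (fun x : ℝ => f (x : ℂ)) (Iio (0 : ℝ)) ∧
    IntegrableOn (fun t : ℝ => f (Complex.I * (t : ℂ))) (Ioi (0 : ℝ)) ∧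
    ∫ x in Iio (0 : ℝ), f (x : ℂ) =
      -Complex.I * ∫ t in Ioi (0 : ℝ), f (Complex.I * (t : ℂ)) := by
  have hca : ∀ z : ℂ, z.re ≤ 0 → 0 ≤ z.im → ContinuousAt f z := fun z h1 h2 =>
    (hf.differentiableAt (hU.mem_nhds (hQU ⟨h1, h2⟩))).continuousAt
  -- Integrability on the negative real axis
  have hint1 : IntegrableOn (fun x : ℝ => f (x : ℂ)) (Iio (0 : ℝ)) := by
    have hmeas : AEStronglyMeasurable (fun x : ℝ => f (x : ℂ))
        (volume.restrict (Iio (0 : ℝ))) := by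
      apply ContinuousOn.aestronglyMeasurable _ measurableSet_Iio
      intro x hx
      exact ((hca x (by simpa using (le_of_lt hx)) (by simp)).comp
        Complex.continuous_ofReal.continuousAt).continuousWithinAt
    refine Integrable.mono' ((wick_exp_mul_integrableOn_Iio hε).const_mul C) hmeas ?_
    filter_upwards [ae_restrict_mem measurableSet_Iio] with x hx
    have hxQ : (x : ℂ) ∈ {z : ℂ | z.re ≤ 0 ∧ 0 ≤ z.im} :=
      ⟨by simpa using (le_of_lt hx), by simp⟩
    calc ‖f (x : ℂ)‖ ≤ C * Real.exp (-ε * ‖(x : ℂ)‖) := hbound _ hxQ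
      _ = C * Real.exp (ε * x) := by
          rw [Complex.norm_real, Real.norm_eq_abs, abs_of_nonpos (le_of_lt hx)]
          ring_nf
  -- Integrability on the positive imaginary axis
  have hint2 : IntegrableOn (fun t : ℝ => f (Complex.I * (t : ℂ))) (Ioi (0 : ℝ)) := by
    have hmeas : AEStronglyMeasurable (fun t : ℝ => f (Complex.I * (t : ℂ)))
        (volume.restrict (Ioi (0 : ℝ))) := by
      apply ContinuousOn.aestronglyMeasurable _ measurableSet_Ioi
      intro t ht
      exact ((hca _ (by simp) (by simpa using (le_of_lt ht))).comp
        (continuous_const.mul Complex.continuous_ofReal).continuousAt).continuousWithinAt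
    refine Integrable.mono' ((exp_neg_integrableOn_Ioi 0 hε).const_mul C) hmeas ?_
    filter_upwards [ae_restrict_mem measurableSet_Ioi] with t ht
    have htQ : Complex.I * (t : ℂ) ∈ {z : ℂ | z.re ≤ 0 ∧ 0 ≤ z.im} :=
      ⟨by simp, by simpa using (le_of_lt ht)⟩
    calc ‖f (Complex.I * (t : ℂ))‖ ≤ C * Real.exp (-ε * ‖Complex.I * (t : ℂ)‖) :=
          hbound _ htQ
      _ = C * Real.exp (-ε * t) := by
          rw [norm_mul, Complex.norm_I, one_mul, Complex.norm_real, Real.norm_eq_abs,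
            abs_of_pos ht]
  refine ⟨hint1, hint2, ?_⟩
  -- Limits of the four sides of the rectangle
  have hA : Tendsto (fun R : ℝ => ∫ x in (-R)..(0 : ℝ), f (x : ℂ)) atTop
      (𝓝 (∫ x in Iio (0 : ℝ), f (x : ℂ))) := by
    have h := intervalIntegral_tendsto_integral_Iic (0 : ℝ)
      ((integrableOn_Iic_iff_integrableOn_Iio).mpr hint1) tendsto_neg_atTop_atBot
    rwa [integral_Iic_eq_integral_Iio] at h
  have hCc : Tendsto (fun R : ℝ => ∫ y in (0 : ℝ)..R, f ((y : ℂ) * Complex.I)) atTop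
      (𝓝 (∫ t in Ioi (0 : ℝ), f (Complex.I * (t : ℂ)))) := by
    have hmc : (fun t : ℝ => f (Complex.I * (t : ℂ))) =
        fun t : ℝ => f ((t : ℂ) * Complex.I) := by
      funext t; rw [mul_comm]
    rw [hmc] at hint2 ⊢
    exact intervalIntegral_tendsto_integral_Ioi 0 hint2 tendsto_id
  have hB : Tendsto (fun R : ℝ => ∫ x in (-R)..(0 : ℝ), f ((x : ℂ) + (R : ℂ) * Complex.I))
      atTop (𝓝 0) := by
    apply squeeze_zero_norm' (a := fun R : ℝ => C * Real.exp (-ε * R) * R)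
    · filter_upwards [eventually_ge_atTop (0 : ℝ)] with R hR
      have hb : ∀ x ∈ Ι (-R) (0 : ℝ), ‖f ((x : ℂ) + (R : ℂ) * Complex.I)‖ ≤
          C * Real.exp (-ε * R) := by
        intro x hx
        rw [uIoc_of_le (neg_nonpos.mpr hR)] at hx
        set z : ℂ := (x : ℂ) + (R : ℂ) * Complex.I with hz
        have hzre : z.re = x := by simp [hz]
        have hzim : z.im = R := by simp [hz]
        have hzQ : z ∈ {z : ℂ | z.re ≤ 0 ∧ 0 ≤ z.im} := ⟨by rw [hzre]; exact hx.2,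
          by rw [hzim]; exact hR⟩
        refine le_trans (hbound z hzQ) ?_
        have hnorm : R ≤ ‖z‖ := by
          have := Complex.abs_im_le_norm z
          rw [hzim] at this
          exact le_trans (le_abs_self R) this
        have : -ε * ‖z‖ ≤ -ε * R := by nlinarith
        exact mul_le_mul_of_nonneg_left (Real.exp_le_exp.mpr this) (le_of_lt hC)
      have h := intervalIntegral.norm_integral_le_of_norm_le_const hb
      have habs : |(0:ℝ) - -R| = R := by rw [zero_sub, neg_neg, _root_.abs_of_nonneg hR]
      rwa [habs] at h
    · exact wick_tendsto_aux hε
  have hD : Tendsto (fun R : ℝ => ∫ y in (0 : ℝ)..R, f (-(R : ℂ) + (y : ℂ) * Complex.I))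
      atTop (𝓝 0) := by
    apply squeeze_zero_norm' (a := fun R : ℝ => C * Real.exp (-ε * R) * R)
    · filter_upwards [eventually_ge_atTop (0 : ℝ)] with R hR
      have hb : ∀ y ∈ Ι (0 : ℝ) R, ‖f (-(R : ℂ) + (y : ℂ) * Complex.I)‖ ≤
          C * Real.exp (-ε * R) := by
        intro y hy
        rw [uIoc_of_le hR] at hy
        set z : ℂ := -(R : ℂ) + (y : ℂ) * Complex.I with hz
        have hzre : z.re = -R := by simp [hz]
        have hzim : z.im = y := by simp [hz]
        have hzQ : z ∈ {z : ℂ | z.re ≤ 0 ∧ 0 ≤ z.im} := ⟨by rw [hzre]; linarith,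
          by rw [hzim]; exact le_of_lt hy.1⟩
        refine le_trans (hbound z hzQ) ?_
        have hnorm : R ≤ ‖z‖ := by
          have := Complex.abs_re_le_norm z
          rw [hzre, abs_neg] at this
          exact le_trans (le_abs_self R) this
        have : -ε * ‖z‖ ≤ -ε * R := by nlinarith
        exact mul_le_mul_of_nonneg_left (Real.exp_le_exp.mpr this) (le_of_lt hC)
      have h := intervalIntegral.norm_integral_le_of_norm_le_const hb
      have habs : |R - (0:ℝ)| = R := by rw [sub_zero, _root_.abs_of_nonneg hR]
      rwa [habs] at h
    · exact wick_tendsto_aux hε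
  -- Rectangle contour identity
  have heq : ∀ᶠ R : ℝ in atTop,
      ((∫ x in (-R)..(0 : ℝ), f ((x : ℂ) + (R : ℂ) * Complex.I)) -
          Complex.I • (∫ y in (0 : ℝ)..R, f ((y : ℂ) * Complex.I)) +
          Complex.I • (∫ y in (0 : ℝ)..R, f (-(R : ℂ) + (y : ℂ) * Complex.I))) =
        (∫ x in (-R)..(0 : ℝ), f (x : ℂ)) := by
    filter_upwards [eventually_ge_atTop (0 : ℝ)] with R hR
    have hsub : ([[(-(R : ℂ)).re, ((R : ℂ) * Complex.I).re]] ×ℂ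
        [[(-(R : ℂ)).im, ((R : ℂ) * Complex.I).im]]) ⊆ U := by
      intro z hz
      rw [Complex.mem_reProdIm] at hz
      apply hQU
      have h1 : z.re ∈ [[-R, (0:ℝ)]] := by simpa using hz.1
      have h2 : z.im ∈ [[(0:ℝ), R]] := by simpa using hz.2
      rw [uIcc_of_le (neg_nonpos.mpr hR)] at h1
      rw [uIcc_of_le hR] at h2
      exact ⟨h1.2, h2.1⟩
    have h := Complex.integral_boundary_rect_eq_zero_of_differentiableOn f
      (-(R : ℂ)) ((R : ℂ) * Complex.I) (hf.mono hsub)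
    simp only [Complex.neg_re, Complex.neg_im, Complex.ofReal_re, Complex.ofReal_im,
      Complex.mul_re, Complex.mul_im, Complex.I_re, Complex.I_im, mul_zero, mul_one,
      zero_mul, sub_zero, zero_sub, neg_zero, zero_add, add_zero, Complex.ofReal_zero,
      Complex.ofReal_neg] at h
    linear_combination -h
  have hcomb : Tendsto (fun R : ℝ =>
      (∫ x in (-R)..(0 : ℝ), f ((x : ℂ) + (R : ℂ) * Complex.I)) -
        Complex.I • (∫ y in (0 : ℝ)..R, f ((y : ℂ) * Complex.I)) +
        Complex.I • (∫ y in (0 : ℝ)..R, f (-(R : ℂ) + (y : ℂ) * Complex.I))) atTop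
      (𝓝 ((0 : ℂ) - Complex.I • (∫ t in Ioi (0 : ℝ), f (Complex.I * (t : ℂ))) +
        Complex.I • (0 : ℂ))) :=
    (hB.sub (hCc.const_smul Complex.I)).add (hD.const_smul Complex.I)
  have hfinal := tendsto_nhds_unique hA (hcomb.congr' heq)
  rw [hfinal]
  simp [smul_eq_mul]
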